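/- (Gaussian covariance of random tangent vectors, real case.) Let Γ ∈ ℝ^{r×p} be a random matrix whose entries are i.i.d. standard normal random variables, and let Y_i, Y_j ∈ ℝ^{r×p} satisfy Y_i Y_iᵀ = Y_j Y_jᵀ = I_r. Then the entrywise expectation satisfies E[(Γ − Y_i Γᵀ Y_i)(Γ − Y_j Γᵀ Y_j)ᵀ] = (p − 2) I_r + tr(Y_i Y_jᵀ) · Y_i Y_jᵀ. In particular, E[(Γ − Y_i Γᵀ Y_i)(Γ − Y_i Γᵀ Y_i)ᵀ] = (p + r − 2) I_r. -/

import Mathlib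

open Matrix MeasureTheory ProbabilityTheory

/-- The law of an `r × p` random matrix with i.i.d. standard normal entries
(entries viewed as functions `Fin r → Fin p → ℝ`). -/
noncomputable def gaussMatReal (r p : ℕ) : Measure (Fin r → Fin p → ℝ) :=
  Measure.pi fun _ : Fin r => Measure.pi fun _ : Fin p => gaussianReal 0 1

section Aux
open Real Filter




lemma std_pdf_eq (x : ℝ) :
    gaussianPDFReal 0 1 x = (Real.sqrt (2 * π))⁻¹ * Real.exp (-(2⁻¹) * x ^ 2) := by
  simp only [gaussianPDFReal, NNReal.coe_one, mul_one, sub_zero]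
  congr 1
  ring_nf

lemma atBot_le_cocompact' : (atBot : Filter ℝ) ≤ cocompact ℝ := by
  rw [cocompact_eq_atBot_atTop]; exact le_sup_left

lemma atTop_le_cocompact' : (atTop : Filter ℝ) ≤ cocompact ℝ := by
  rw [cocompact_eq_atBot_atTop]; exact le_sup_right

lemma tendsto_exp_sq : Tendsto (fun x : ℝ => Real.exp (-(2⁻¹) * x ^ 2)) (Filter.cocompact ℝ) (nhds 0) := by
  have := tendsto_rpow_abs_mul_exp_neg_mul_sq_cocompact (a := 2⁻¹) (by norm_num) 0
  simpa using this

lemma tendsto_x_exp_sq : Tendsto (fun x : ℝ => x * Real.exp (-(2⁻¹) * x ^ 2)) (Filter.cocompact ℝ) (nhds 0) := by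
  have := tendsto_rpow_abs_mul_exp_neg_mul_sq_cocompact (a := 2⁻¹) (by norm_num) 1
  simp only [Real.rpow_one] at this
  rw [tendsto_zero_iff_norm_tendsto_zero]
  refine this.congr fun x => ?_
  rw [Real.norm_eq_abs, abs_mul, abs_of_nonneg (Real.exp_pos _).le]

lemma integral_x_exp : ∫ x : ℝ, x * Real.exp (-(2⁻¹) * x ^ 2) = 0 := by
  have hderiv : ∀ x : ℝ, HasDerivAt (fun y : ℝ => -Real.exp (-(2⁻¹) * y ^ 2))
      (x * Real.exp (-(2⁻¹) * x ^ 2)) x := by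
    intro x
    have h1 : HasDerivAt (fun y : ℝ => -(2⁻¹) * y ^ 2) (-(2⁻¹) * (2 * x)) x := by
      simpa using ((hasDerivAt_pow 2 x)).const_mul (-(2⁻¹ : ℝ))
    have : HasDerivAt (fun y : ℝ => -Real.exp (-(2⁻¹) * y ^ 2))
        (-(Real.exp (-(2⁻¹) * x ^ 2) * (-(2⁻¹) * (2 * x)))) x := (h1.exp).neg
    convert this using 1
    ring
  have hint : Integrable (fun x : ℝ => x * Real.exp (-(2⁻¹) * x ^ 2)) :=
    integrable_mul_exp_neg_mul_sq (by norm_num)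
  have hb : Tendsto (fun y : ℝ => -Real.exp (-(2⁻¹) * y ^ 2)) atBot (nhds (-0)) :=
    (tendsto_exp_sq.mono_left atBot_le_cocompact').neg
  have ht : Tendsto (fun y : ℝ => -Real.exp (-(2⁻¹) * y ^ 2)) atTop (nhds (-0)) :=
    (tendsto_exp_sq.mono_left atTop_le_cocompact').neg
  rw [neg_zero] at hb ht
  simpa using integral_of_hasDerivAt_of_tendsto hderiv hint hb ht

lemma integrable_sq_exp : Integrable (fun x : ℝ => x ^ 2 * Real.exp (-(2⁻¹) * x ^ 2)) := by
  have := integrable_rpow_mul_exp_neg_mul_sq (b := 2⁻¹) (by norm_num) (s := 2) (by norm_num)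
  refine this.congr (Eventually.of_forall fun x => ?_)
  norm_num [Real.rpow_two]

lemma integral_sq_exp : ∫ x : ℝ, x ^ 2 * Real.exp (-(2⁻¹) * x ^ 2) = Real.sqrt (2 * π) := by
  have hderiv : ∀ x : ℝ, HasDerivAt (fun y : ℝ => -y * Real.exp (-(2⁻¹) * y ^ 2))
      (x ^ 2 * Real.exp (-(2⁻¹) * x ^ 2) - Real.exp (-(2⁻¹) * x ^ 2)) x := by
    intro x
    have h1 : HasDerivAt (fun y : ℝ => -(2⁻¹) * y ^ 2) (-(2⁻¹) * (2 * x)) x := by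
      simpa using ((hasDerivAt_pow 2 x)).const_mul (-(2⁻¹ : ℝ))
    have h2 : HasDerivAt (fun y : ℝ => -y * Real.exp (-(2⁻¹) * y ^ 2))
        (-1 * Real.exp (-(2⁻¹) * x ^ 2) + -id x * (Real.exp (-(2⁻¹) * x ^ 2) * (-(2⁻¹) * (2 * x)))) x :=
      (hasDerivAt_id x).neg.mul h1.exp
    convert h2 using 1
    simp only [id_eq]
    ring
  have hint2 : Integrable (fun x : ℝ => Real.exp (-(2⁻¹) * x ^ 2)) :=
    integrable_exp_neg_mul_sq (by norm_num)
  have hint : Integrable (fun x : ℝ => x ^ 2 * Real.exp (-(2⁻¹) * x ^ 2) - Real.exp (-(2⁻¹) * x ^ 2)) :=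
    integrable_sq_exp.sub hint2
  have hb : Tendsto (fun y : ℝ => -y * Real.exp (-(2⁻¹) * y ^ 2)) atBot (nhds 0) := by
    have h := (tendsto_x_exp_sq.mono_left atBot_le_cocompact').neg
    rw [neg_zero] at h
    exact h.congr fun x => by ring
  have ht : Tendsto (fun y : ℝ => -y * Real.exp (-(2⁻¹) * y ^ 2)) atTop (nhds 0) := by
    have h := (tendsto_x_exp_sq.mono_left atTop_le_cocompact').neg
    rw [neg_zero] at h
    exact h.congr fun x => by ring
  have h0 := integral_of_hasDerivAt_of_tendsto hderiv hint hb ht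
  have h0' : (∫ x : ℝ, (x ^ 2 * Real.exp (-(2⁻¹) * x ^ 2) - Real.exp (-(2⁻¹) * x ^ 2))) = 0 := by
    simpa using h0
  rw [integral_sub integrable_sq_exp hint2] at h0'
  have hg : ∫ x : ℝ, Real.exp (-(2⁻¹) * x ^ 2) = Real.sqrt (2 * π) := by
    rw [integral_gaussian]
    congr 1
    ring
  linarith



lemma gauss_integral_eq (f : ℝ → ℝ) :
    ∫ x, f x ∂gaussianReal 0 1 = ∫ x, gaussianPDFReal 0 1 x * f x := by
  rw [gaussianReal_of_var_ne_zero 0 one_ne_zero, gaussianPDF_def]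
  have : (fun x => ENNReal.ofReal (gaussianPDFReal 0 1 x))
      = fun x => ((gaussianPDFReal 0 1 x).toNNReal : ENNReal) := rfl
  rw [this, integral_withDensity_eq_integral_smul (measurable_gaussianPDFReal 0 1).real_toNNReal]
  refine integral_congr_ae (Eventually.of_forall fun x => ?_)
  simp [NNReal.smul_def, Real.coe_toNNReal _ (gaussianPDFReal_nonneg 0 1 x)]

lemma gauss_integrable_iff (f : ℝ → ℝ) :
    Integrable f (gaussianReal 0 1) ↔ Integrable (fun x => gaussianPDFReal 0 1 x * f x) := by
  rw [gaussianReal_of_var_ne_zero 0 one_ne_zero, gaussianPDF_def]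
  have : (fun x => ENNReal.ofReal (gaussianPDFReal 0 1 x))
      = fun x => ((gaussianPDFReal 0 1 x).toNNReal : ENNReal) := rfl
  rw [this, integrable_withDensity_iff_integrable_smul (measurable_gaussianPDFReal 0 1).real_toNNReal]
  refine integrable_congr (Eventually.of_forall fun x => ?_)
  simp [NNReal.smul_def, Real.coe_toNNReal _ (gaussianPDFReal_nonneg 0 1 x)]



lemma sqrt_two_pi_ne : Real.sqrt (2 * π) ≠ 0 := by
  positivity

lemma gauss_m1 : ∫ x, x ∂gaussianReal 0 1 = 0 := by
  rw [gauss_integral_eq]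
  have : ∀ x : ℝ, gaussianPDFReal 0 1 x * x
      = (Real.sqrt (2 * π))⁻¹ * (x * Real.exp (-(2⁻¹) * x ^ 2)) := by
    intro x; rw [std_pdf_eq]; ring
  simp_rw [this, integral_const_mul, integral_x_exp, mul_zero]

lemma gauss_m2 : ∫ x, x * x ∂gaussianReal 0 1 = 1 := by
  rw [gauss_integral_eq]
  have : ∀ x : ℝ, gaussianPDFReal 0 1 x * (x * x)
      = (Real.sqrt (2 * π))⁻¹ * (x ^ 2 * Real.exp (-(2⁻¹) * x ^ 2)) := by
    intro x; rw [std_pdf_eq]; ring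
  simp_rw [this, integral_const_mul, integral_sq_exp]
  exact inv_mul_cancel₀ sqrt_two_pi_ne

lemma gauss_int1 : Integrable (fun x : ℝ => x) (gaussianReal 0 1) := by
  rw [gauss_integrable_iff]
  have := (integrable_mul_exp_neg_mul_sq (b := 2⁻¹) (by norm_num)).const_mul (Real.sqrt (2 * π))⁻¹
  refine this.congr (Eventually.of_forall fun x => ?_)
  simp only [std_pdf_eq]; ring

lemma gauss_int2 : Integrable (fun x : ℝ => x * x) (gaussianReal 0 1) := by
  rw [gauss_integrable_iff]
  have := integrable_sq_exp.const_mul (Real.sqrt (2 * π))⁻¹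
  refine this.congr (Eventually.of_forall fun x => ?_)
  simp only [std_pdf_eq]; ring

section PiHelpers

variable {ι : Type*} [Fintype ι] [DecidableEq ι] {E : Type*} [MeasureSpace E]
  [IsProbabilityMeasure (volume : Measure E)]

lemma pi_integral_eval (φ : E → ℝ) (c : ι) :
    ∫ x : ι → E, φ (x c) = ∫ t, φ t := by
  have h : (fun x : ι → E => φ (x c))
      = fun x => ∏ j, (if j = c then φ (x j) else 1) := by
    funext x
    simp [Finset.prod_ite_eq']
  rw [h, integral_fintype_prod_volume_eq_prod (fun j t => if j = c then φ t else 1)]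
  have h2 : ∀ j : ι, (∫ t : E, (if j = c then φ t else 1)) = if j = c then ∫ t, φ t else 1 := by
    intro j
    split_ifs <;> simp
  simp_rw [h2]
  simp [Finset.prod_ite_eq']

lemma pi_integral_eval_mul (φ ψ : E → ℝ) (c c' : ι) :
    ∫ x : ι → E, φ (x c) * ψ (x c')
      = if c = c' then ∫ t, φ t * ψ t else (∫ t, φ t) * ∫ t, ψ t := by
  have h : (fun x : ι → E => φ (x c) * ψ (x c'))
      = fun x => ∏ j, ((if j = c then φ (x j) else 1) * (if j = c' then ψ (x j) else 1)) := by
    funext x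
    rw [Finset.prod_mul_distrib]
    simp [Finset.prod_ite_eq']
  rw [h, integral_fintype_prod_volume_eq_prod
    (fun j t => (if j = c then φ t else 1) * (if j = c' then ψ t else 1))]
  rcases eq_or_ne c c' with rfl | hcc
  · have h2 : ∀ j : ι, (∫ t : E, (if j = c then φ t else 1) * (if j = c then ψ t else 1))
        = if j = c then ∫ t, φ t * ψ t else 1 := by
      intro j; split_ifs <;> simp
    simp_rw [h2]
    simp [Finset.prod_ite_eq']
  · have h2 : ∀ j : ι, (∫ t : E, (if j = c then φ t else 1) * (if j = c' then ψ t else 1))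
        = (if j = c then ∫ t, φ t else 1) * (if j = c' then ∫ t, ψ t else 1) := by
      intro j
      rcases eq_or_ne j c with rfl | hjc
      · simp [Ne.symm, hcc]
      · rcases eq_or_ne j c' with rfl | hjc'
        · simp [hjc]
        · simp [hjc, hjc']
    simp_rw [h2, Finset.prod_mul_distrib]
    simp [Finset.prod_ite_eq', hcc]

lemma pi_integrable_eval_mul {φ ψ : E → ℝ} (hφ : Integrable φ) (hψ : Integrable ψ)
    (hφψ : Integrable (fun t => φ t * ψ t)) (c c' : ι) :
    Integrable (fun x : ι → E => φ (x c) * ψ (x c')) := by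
  have h : (fun x : ι → E => φ (x c) * ψ (x c'))
      = fun x => ∏ j, ((if j = c then φ (x j) else 1) * (if j = c' then ψ (x j) else 1)) := by
    funext x
    rw [Finset.prod_mul_distrib]
    simp [Finset.prod_ite_eq']
  rw [h]
  refine Integrable.fintype_prod (f := fun j t => (if j = c then φ t else 1) * (if j = c' then ψ t else 1)) fun j => ?_
  rcases eq_or_ne j c with rfl | hjc
  · rcases eq_or_ne j c' with rfl | hjc'
    · exact hφψ.congr (Eventually.of_forall fun x => by simp)
    · exact hφ.congr (Eventually.of_forall fun x => by simp [hjc'])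
  · rcases eq_or_ne j c' with rfl | hjc'
    · exact hψ.congr (Eventually.of_forall fun x => by simp [hjc])
    · exact (integrable_const 1).congr (Eventually.of_forall fun x => by simp [hjc, hjc'])

lemma pi_integrable_eval {φ : E → ℝ} (hφ : Integrable φ) (c : ι) :
    Integrable (fun x : ι → E => φ (x c)) := by
  have := pi_integrable_eval_mul (ψ := fun _ => (1:ℝ)) hφ (integrable_const 1)
    (hφ.congr (Eventually.of_forall fun x => by simp)) c c
  exact this.congr (Eventually.of_forall fun x => by simp)

end PiHelpers




section Moments

variable (r p : ℕ)

noncomputable local instance : MeasureSpace ℝ := ⟨gaussianReal 0 1⟩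

local instance : IsProbabilityMeasure (volume : Measure ℝ) :=
  inferInstanceAs (IsProbabilityMeasure (gaussianReal 0 1))

lemma gaussMatReal_eq_volume : gaussMatReal r p = (volume : Measure (Fin r → Fin p → ℝ)) := rfl

lemma mat_moment2 (d d' : Fin r) (c c' : Fin p) :
    ∫ g, g d c * g d' c' ∂gaussMatReal r p = if d = d' ∧ c = c' then 1 else 0 := by
  rw [gaussMatReal_eq_volume]
  have h0 : ∫ x : Fin p → ℝ, x c = 0 := by
    rw [pi_integral_eval (fun t : ℝ => t) c]; exact gauss_m1
  have h0' : ∫ x : Fin p → ℝ, x c' = 0 := by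
    rw [pi_integral_eval (fun t : ℝ => t) c']; exact gauss_m1
  have gm1 : (∫ t : ℝ, t) = 0 := gauss_m1
  have gm2 : (∫ t : ℝ, t * t) = 1 := gauss_m2
  have h2 : ∫ x : Fin p → ℝ, x c * x c' = if c = c' then 1 else 0 := by
    rw [pi_integral_eval_mul (fun t : ℝ => t) (fun t : ℝ => t) c c', gm2, gm1]
    split_ifs <;> norm_num
  rw [pi_integral_eval_mul (fun x : Fin p → ℝ => x c) (fun x : Fin p → ℝ => x c') d d']
  rw [h2, h0, h0']
  split_ifs with h h1 h2' <;> simp_all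

end Moments

section Moments2

variable (r p : ℕ)

noncomputable local instance : MeasureSpace ℝ := ⟨gaussianReal 0 1⟩

local instance : IsProbabilityMeasure (volume : Measure ℝ) :=
  inferInstanceAs (IsProbabilityMeasure (gaussianReal 0 1))

lemma mat_integrable2 (d d' : Fin r) (c c' : Fin p) :
    Integrable (fun g : Fin r → Fin p → ℝ => g d c * g d' c') (gaussMatReal r p) := by
  rw [gaussMatReal_eq_volume]
  have gi1 : Integrable (fun x : ℝ => x) := gauss_int1
  have gi2 : Integrable (fun x : ℝ => x * x) := gauss_int2
  have hc : Integrable (fun x : Fin p → ℝ => x c) := pi_integrable_eval gi1 c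
  have hc' : Integrable (fun x : Fin p → ℝ => x c') := pi_integrable_eval gi1 c'
  have hcc' : Integrable (fun x : Fin p → ℝ => x c * x c') :=
    pi_integrable_eval_mul gi1 gi1 gi2 c c'
  exact pi_integrable_eval_mul hc hc' hcc' d d'

lemma mat_key (α β : Fin r × Fin p → ℝ) :
    (∫ g : Fin r → Fin p → ℝ, (∑ q : Fin r × Fin p, α q * g q.1 q.2) *
      (∑ q : Fin r × Fin p, β q * g q.1 q.2) ∂gaussMatReal r p)
    = ∑ q : Fin r × Fin p, α q * β q := by
  have hrw : ∀ g : Fin r → Fin p → ℝ,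
      (∑ q : Fin r × Fin p, α q * g q.1 q.2) *
        (∑ q : Fin r × Fin p, β q * g q.1 q.2)
      = ∑ q : Fin r × Fin p, ∑ q' : Fin r × Fin p,
          (α q * β q') * (g q.1 q.2 * g q'.1 q'.2) := by
    intro g
    rw [Finset.sum_mul_sum]
    exact Finset.sum_congr rfl fun q _ => Finset.sum_congr rfl fun q' _ => by ring
  simp_rw [hrw]
  rw [integral_finset_sum _ (fun q _ => integrable_finset_sum _
    (fun q' _ => (mat_integrable2 r p q.1 q'.1 q.2 q'.2).const_mul _))]
  have : ∀ q : Fin r × Fin p,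
      (∫ g : Fin r → Fin p → ℝ, ∑ q' : Fin r × Fin p,
        (α q * β q') * (g q.1 q.2 * g q'.1 q'.2) ∂gaussMatReal r p)
      = ∑ q' : Fin r × Fin p, (α q * β q') *
          (if q.1 = q'.1 ∧ q.2 = q'.2 then (1:ℝ) else 0) := by
    intro q
    rw [integral_finset_sum _ (fun q' _ => (mat_integrable2 r p q.1 q'.1 q.2 q'.2).const_mul _)]
    refine Finset.sum_congr rfl fun q' _ => ?_
    rw [MeasureTheory.integral_const_mul, mat_moment2]
  simp_rw [this]
  refine Finset.sum_congr rfl fun q _ => ?_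
  have : ∀ q' : Fin r × Fin p, (if q.1 = q'.1 ∧ q.2 = q'.2 then (1:ℝ) else 0)
      = if q = q' then 1 else 0 := by
    intro q'
    simp [Prod.ext_iff]
  simp_rw [this, mul_ite, mul_one, mul_zero, Finset.sum_ite_eq, Finset.mem_univ, if_true]

end Moments2





section Main

variable {r p : ℕ}

lemma lin_expand (α β : Fin r × Fin p → ℝ) (g : Fin r → Fin p → ℝ) :
    (∑ q : Fin r × Fin p, α q * g q.1 q.2) * (∑ q : Fin r × Fin p, β q * g q.1 q.2)
      = ∑ q : Fin r × Fin p, ∑ q' : Fin r × Fin p,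
          (α q * β q') * (g q.1 q.2 * g q'.1 q'.2) := by
  rw [Finset.sum_mul_sum]
  exact Finset.sum_congr rfl fun q _ => Finset.sum_congr rfl fun q' _ => by ring

lemma lin_integrable (α β : Fin r × Fin p → ℝ) :
    Integrable (fun g : Fin r → Fin p → ℝ =>
      (∑ q : Fin r × Fin p, α q * g q.1 q.2) *
      (∑ q : Fin r × Fin p, β q * g q.1 q.2)) (gaussMatReal r p) := by
  have h : (fun g : Fin r → Fin p → ℝ =>
      (∑ q : Fin r × Fin p, α q * g q.1 q.2) * (∑ q : Fin r × Fin p, β q * g q.1 q.2))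
      = fun g => ∑ q : Fin r × Fin p, ∑ q' : Fin r × Fin p,
          (α q * β q') * (g q.1 q.2 * g q'.1 q'.2) := funext fun g => lin_expand α β g
  rw [h]
  exact integrable_finset_sum _ fun q _ => integrable_finset_sum _ fun q' _ =>
    (mat_integrable2 r p q.1 q'.1 q.2 q'.2).const_mul _

/-- coefficients of the linear form `(Γ - Y Γᵀ Y) a k` -/
def coefA (Y : Matrix (Fin r) (Fin p) ℝ) (a : Fin r) (k : Fin p) (q : Fin r × Fin p) : ℝ :=
  (if q = (a, k) then 1 else 0) - Y a q.2 * Y q.1 k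

lemma lin_eq (Y : Matrix (Fin r) (Fin p) ℝ) (a : Fin r) (k : Fin p) (g : Fin r → Fin p → ℝ) :
    (Matrix.of g - Y * (Matrix.of g)ᵀ * Y) a k
      = ∑ q : Fin r × Fin p, coefA Y a k q * g q.1 q.2 := by
  simp only [coefA, sub_mul, Finset.sum_sub_distrib, ite_mul, one_mul, zero_mul,
    Finset.sum_ite_eq', Finset.mem_univ, if_true]
  simp only [Matrix.sub_apply, Matrix.of_apply, Matrix.mul_apply, Matrix.transpose_apply]
  congr 1
  rw [Fintype.sum_prod_type]
  refine Finset.sum_congr rfl fun d _ => ?_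
  rw [Finset.sum_mul]
  exact Finset.sum_congr rfl fun c _ => by ring

end Main

section Main2

variable {r p : ℕ}

lemma coef_sum (Yi Yj : Matrix (Fin r) (Fin p) ℝ) (a b : Fin r) (k : Fin p) :
    ∑ q : Fin r × Fin p, coefA Yi a k q * coefA Yj b k q
      = (if a = b then (1:ℝ) else 0) - Yj b k * Yj a k - Yi a k * Yi b k
        + (∑ c, Yi a c * Yj b c) * (∑ d, Yi d k * Yj d k) := by
  have expand : ∀ q : Fin r × Fin p, coefA Yi a k q * coefA Yj b k q
      = (if q = (a,k) then (1:ℝ) else 0) * (if q = (b,k) then (1:ℝ) else 0)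
        - (if q = (a,k) then (1:ℝ) else 0) * (Yj b q.2 * Yj q.1 k)
        - (if q = (b,k) then (1:ℝ) else 0) * (Yi a q.2 * Yi q.1 k)
        + (Yi a q.2 * Yj b q.2) * (Yi q.1 k * Yj q.1 k) := by
    intro q; simp only [coefA]; ring
  simp_rw [expand]
  rw [Finset.sum_add_distrib, Finset.sum_sub_distrib, Finset.sum_sub_distrib]
  congr 1
  · congr 1
    · congr 1
      · simp only [ite_mul, one_mul, zero_mul, Finset.sum_ite_eq', Finset.mem_univ, if_true]
        simp [Prod.ext_iff]
      · simp only [ite_mul, one_mul, zero_mul, Finset.sum_ite_eq', Finset.mem_univ, if_true]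
    · simp only [ite_mul, one_mul, zero_mul, Finset.sum_ite_eq', Finset.mem_univ, if_true]
  · rw [Fintype.sum_prod_type, Finset.sum_mul_sum]
    rw [Finset.sum_comm]

lemma total_sum (Yi Yj : Matrix (Fin r) (Fin p) ℝ)
    (hYi : Yi * Yiᵀ = 1) (hYj : Yj * Yjᵀ = 1) (a b : Fin r) :
    ∑ k : Fin p, ∑ q : Fin r × Fin p, coefA Yi a k q * coefA Yj b k q
      = ((p:ℝ) - 2) * (if a = b then 1 else 0)
        + (Yi * Yjᵀ).trace * (Yi * Yjᵀ) a b := by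
  simp_rw [coef_sum]
  rw [Finset.sum_add_distrib, Finset.sum_sub_distrib, Finset.sum_sub_distrib,
    Finset.sum_const, Finset.card_univ, Fintype.card_fin]
  have h1 : ∑ k, Yj b k * Yj a k = if a = b then (1:ℝ) else 0 := by
    have : (Yj * Yjᵀ) b a = ∑ k, Yj b k * Yj a k := by
      rw [Matrix.mul_apply]; exact Finset.sum_congr rfl fun k _ => by rw [Matrix.transpose_apply]
    rw [← this, hYj, Matrix.one_apply]
    simp [eq_comm]
  have h2 : ∑ k, Yi a k * Yi b k = if a = b then (1:ℝ) else 0 := by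
    have : (Yi * Yiᵀ) a b = ∑ k, Yi a k * Yi b k := by
      rw [Matrix.mul_apply]; exact Finset.sum_congr rfl fun k _ => by rw [Matrix.transpose_apply]
    rw [← this, hYi, Matrix.one_apply]
  have h3 : ∑ k : Fin p, (∑ c, Yi a c * Yj b c) * (∑ d : Fin r, Yi d k * Yj d k)
      = (Yi * Yjᵀ).trace * (Yi * Yjᵀ) a b := by
    rw [← Finset.mul_sum]
    have he : (Yi * Yjᵀ) a b = ∑ c, Yi a c * Yj b c := by
      rw [Matrix.mul_apply]; exact Finset.sum_congr rfl fun c _ => by rw [Matrix.transpose_apply]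
    have ht : (Yi * Yjᵀ).trace = ∑ k : Fin p, ∑ d : Fin r, Yi d k * Yj d k := by
      rw [Matrix.trace]
      have hd : ∀ d : Fin r, (Yi * Yjᵀ).diag d = ∑ k : Fin p, Yi d k * Yj d k := by
        intro d
        rw [Matrix.diag_apply, Matrix.mul_apply]
        exact Finset.sum_congr rfl fun k _ => by rw [Matrix.transpose_apply]
      simp_rw [hd]
      exact Finset.sum_comm
    rw [← he, ← ht]
    ring
  rw [h1, h2, h3, nsmul_eq_mul]
  ring

lemma entry_integral (Yi Yj : Matrix (Fin r) (Fin p) ℝ)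
    (hYi : Yi * Yiᵀ = 1) (hYj : Yj * Yjᵀ = 1) (a b : Fin r) :
    (∫ g : Fin r → Fin p → ℝ,
        (((Matrix.of g - Yi * (Matrix.of g)ᵀ * Yi) *
          (Matrix.of g - Yj * (Matrix.of g)ᵀ * Yj)ᵀ) a b) ∂(gaussMatReal r p))
      = ((p:ℝ) - 2) * (if a = b then 1 else 0)
        + (Yi * Yjᵀ).trace * (Yi * Yjᵀ) a b := by
  have hpt : ∀ g : Fin r → Fin p → ℝ,
      (((Matrix.of g - Yi * (Matrix.of g)ᵀ * Yi) *
        (Matrix.of g - Yj * (Matrix.of g)ᵀ * Yj)ᵀ) a b)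
      = ∑ k : Fin p, (∑ q : Fin r × Fin p, coefA Yi a k q * g q.1 q.2) *
          (∑ q : Fin r × Fin p, coefA Yj b k q * g q.1 q.2) := by
    intro g
    rw [Matrix.mul_apply]
    refine Finset.sum_congr rfl fun k _ => ?_
    rw [Matrix.transpose_apply, lin_eq, lin_eq]
  simp_rw [hpt]
  rw [integral_finset_sum _ (fun k _ => lin_integrable _ _)]
  simp_rw [mat_key]
  exact total_sum Yi Yj hYi hYj a b

end Main2

end Aux

/-- **Gaussian covariance of random tangent vectors (real case).**  If `Γ` has i.i.d. standard
normal entries and `Y_i Y_iᵀ = Y_j Y_jᵀ = I_r`, then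
`E[(Γ − Y_i Γᵀ Y_i)(Γ − Y_j Γᵀ Y_j)ᵀ] = (p − 2) I_r + tr(Y_i Y_jᵀ) Y_i Y_jᵀ` entrywise;
in particular for `i = j` the expectation is `(p + r − 2) I_r`. -/
theorem gaussian_tangent_covariance
    (r p : ℕ) (hr : 1 ≤ r) (hrp : r ≤ p)
    (Yi Yj : Matrix (Fin r) (Fin p) ℝ)
    (hYi : Yi * Yiᵀ = 1) (hYj : Yj * Yjᵀ = 1) :
    (∀ a b : Fin r,
      (∫ g : Fin r → Fin p → ℝ,
          (((Matrix.of g - Yi * (Matrix.of g)ᵀ * Yi) *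
            (Matrix.of g - Yj * (Matrix.of g)ᵀ * Yj)ᵀ) a b) ∂(gaussMatReal r p))
        = (((p : ℝ) - 2) • (1 : Matrix (Fin r) (Fin r) ℝ)
            + (Yi * Yjᵀ).trace • (Yi * Yjᵀ)) a b) ∧
    (∀ a b : Fin r,
      (∫ g : Fin r → Fin p → ℝ,
          (((Matrix.of g - Yi * (Matrix.of g)ᵀ * Yi) *
            (Matrix.of g - Yi * (Matrix.of g)ᵀ * Yi)ᵀ) a b) ∂(gaussMatReal r p))
        = (((p : ℝ) + r - 2) • (1 : Matrix (Fin r) (Fin r) ℝ)) a b) := by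
  constructor
  · intro a b
    rw [entry_integral Yi Yj hYi hYj a b]
    simp only [Matrix.add_apply, Matrix.smul_apply, Matrix.one_apply, smul_eq_mul]
  · intro a b
    rw [entry_integral Yi Yi hYi hYi a b, hYi, Matrix.trace_one]
    simp only [Matrix.smul_apply, Matrix.one_apply, smul_eq_mul, Fintype.card_fin]
    split_ifs <;> push_cast <;> ring
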